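/- Let μ be a probability measure, (L_λ)_{λ∈[a,b]} a family of probability densities with respect to μ that is uniformly integrable, and suppose λ ↦ f_λ is continuous in probability (with respect to μ) as a map into measurable functions, and λ ↦ U_λ are measurable maps with (U_λ)_*μ = L_λ·μ such that λ ↦ g∘U_λ is continuous in probability for every bounded continuous g. Then λ ↦ f_λ ∘ U_λ is continuous in probability. -/

import Mathlib

open MeasureTheory Filter
open scoped ENNReal NNReal

/-- Lusin-type approximation: a measurable real function on a Polish probability
space can be approximated by a bounded continuous function outside a set of small
measure. -/
lemma lusin_approx_aux
    {Ω : Type*} [TopologicalSpace Ω] [PolishSpace Ω] [MeasurableSpace Ω] [BorelSpace Ω]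
    (μ : Measure Ω) [IsProbabilityMeasure μ] (f : Ω → ℝ) (hf : Measurable f)
    {ε δ : ℝ} (hε : 0 < ε) (hδ : 0 < δ) :
    ∃ g : BoundedContinuousFunction Ω ℝ,
      μ {ω | ε ≤ |f ω - g ω|} ≤ ENNReal.ofReal δ := by
  letI := TopologicalSpace.upgradeIsCompletelyMetrizable Ω
  -- truncation level
  have htend : Tendsto (fun M : ℕ => μ {ω | (M : ℝ) ≤ |f ω|}) atTop (nhds 0) := by
    have h0 : (⋂ M : ℕ, {ω | (M : ℝ) ≤ |f ω|}) = ∅ := by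
      ext ω
      simp only [Set.mem_iInter, Set.mem_setOf_eq, Set.mem_empty_iff_false, iff_false, not_forall,
        not_le]
      obtain ⟨M, hM⟩ := exists_nat_gt |f ω|
      exact ⟨M, hM⟩
    have := tendsto_measure_iInter_atTop
      (s := fun M : ℕ => {ω | (M : ℝ) ≤ |f ω|})
      (fun M => ((measurableSet_le measurable_const hf.abs)).nullMeasurableSet)
      (fun i j hij => by
        intro ω hω
        simp only [Set.mem_setOf_eq] at *
        exact le_trans (by exact_mod_cast Nat.cast_le.mpr hij) hω)
      ⟨0, measure_ne_top μ _⟩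
    rw [h0] at this
    simpa [Function.comp_def] using this
  have hpos2 : (0 : ℝ≥0∞) < ENNReal.ofReal (δ / 2) := by
    simp [ENNReal.ofReal_pos]; linarith
  obtain ⟨M, hM⟩ : ∃ M : ℕ, μ {ω | (M : ℝ) ≤ |f ω|} ≤ ENNReal.ofReal (δ / 2) := by
    have := (htend.eventually (ge_mem_nhds hpos2)).exists
    obtain ⟨M, hM⟩ := this
    exact ⟨M, hM⟩
  set c : ℝ := (M : ℝ) with hc
  set fM : Ω → ℝ := fun ω => max (-c) (min c (f ω)) with hfM
  have hfMm : Measurable fM := measurable_const.max (measurable_const.min hf)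
  have hfMb : ∀ ω, ‖fM ω‖ ≤ c := by
    intro ω
    rw [Real.norm_eq_abs, abs_le]
    constructor
    · exact le_max_left _ _
    · refine max_le ?_ (min_le_left _ _)
      simp [hc]
  have hmem : MemLp fM 1 μ :=
    MemLp.of_bound hfMm.aestronglyMeasurable c (Filter.Eventually.of_forall hfMb)
  obtain ⟨g, hg, -⟩ := hmem.exists_boundedContinuous_eLpNorm_sub_le (E := ℝ) ENNReal.one_ne_top
    (ε := ENNReal.ofReal (ε * (δ / 2))) (by simp only [ne_eq, ENNReal.ofReal_eq_zero, not_le]; positivity)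
  refine ⟨g, ?_⟩
  -- Markov inequality for fM - g
  have hmarkov : μ {ω | ε ≤ |fM ω - g ω|} ≤ ENNReal.ofReal (δ / 2) := by
    have hsub : AEStronglyMeasurable (fM - (g : Ω → ℝ)) μ :=
      (hfMm.sub g.continuous.measurable).aestronglyMeasurable
    have h := meas_ge_le_mul_pow_eLpNorm_enorm (μ := μ) one_ne_zero ENNReal.one_ne_top hsub
      (ε := ENNReal.ofReal ε) (by simp only [ne_eq, ENNReal.ofReal_eq_zero, not_le]; exact hε)
      (fun h => absurd h ENNReal.ofReal_ne_top)
    simp only [ENNReal.toReal_one, ENNReal.rpow_one] at h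
    have hset : {ω | ε ≤ |fM ω - g ω|} = {x | ENNReal.ofReal ε ≤ (‖(fM - (g : Ω → ℝ)) x‖₊ : ℝ≥0∞)} := by
      ext ω
      simp only [Set.mem_setOf_eq, Pi.sub_apply]
      rw [← Real.norm_eq_abs, ← enorm_eq_nnnorm, ← ofReal_norm]
      exact (ENNReal.ofReal_le_ofReal_iff (norm_nonneg _)).symm
    rw [hset]
    calc μ {x | ENNReal.ofReal ε ≤ (‖(fM - (g : Ω → ℝ)) x‖₊ : ℝ≥0∞)}
        ≤ (ENNReal.ofReal ε)⁻¹ * eLpNorm (fM - (g : Ω → ℝ)) 1 μ := h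
      _ ≤ (ENNReal.ofReal ε)⁻¹ * ENNReal.ofReal (ε * (δ / 2)) := by
          exact mul_le_mul_right hg _
      _ = ENNReal.ofReal (δ / 2) := by
          rw [ENNReal.ofReal_mul hε.le, ← mul_assoc,
            ENNReal.inv_mul_cancel (by simp only [ne_eq, ENNReal.ofReal_eq_zero, not_le]; exact hε)
              ENNReal.ofReal_ne_top, one_mul]
  -- combine
  have hsubset : {ω | ε ≤ |f ω - g ω|} ⊆ {ω | (M : ℝ) ≤ |f ω|} ∪ {ω | ε ≤ |fM ω - g ω|} := by
    intro ω hω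
    by_cases h : (M : ℝ) ≤ |f ω|
    · exact Or.inl h
    · right
      push_neg at h
      have habs := abs_le.mp (le_of_lt h)
      have : fM ω = f ω := by
        simp only [hfM, hc]
        rw [min_eq_right habs.2, max_eq_right habs.1]
      simpa [this] using hω
  calc μ {ω | ε ≤ |f ω - g ω|} ≤ μ ({ω | (M : ℝ) ≤ |f ω|} ∪ {ω | ε ≤ |fM ω - g ω|}) :=
        measure_mono hsubset
    _ ≤ μ {ω | (M : ℝ) ≤ |f ω|} + μ {ω | ε ≤ |fM ω - g ω|} := measure_union_le _ _
    _ ≤ ENNReal.ofReal (δ / 2) + ENNReal.ofReal (δ / 2) := add_le_add hM hmarkov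
    _ = ENNReal.ofReal δ := by rw [← ENNReal.ofReal_add (by linarith) (by linarith)]; ring_nf
/-- The pushforward measures `(U_l)_*μ` are uniformly absolutely continuous
w.r.t. `μ`, thanks to the uniform integrability of the densities. -/
lemma pushforward_small_aux
    {Ω : Type*} [TopologicalSpace Ω] [PolishSpace Ω] [MeasurableSpace Ω] [BorelSpace Ω]
    (μ : Measure Ω) [IsProbabilityMeasure μ] (a b : ℝ)
    (U : ℝ → Ω → Ω) (hUm : ∀ l, Measurable (U l))
    (L : ℝ → Ω → ℝ) (hLm : ∀ l, Measurable (L l)) (hLnn : ∀ l ω, 0 ≤ L l ω)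
    (hpush : ∀ l ∈ Set.Icc a b,
      Measure.map (U l) μ = μ.withDensity (fun ω => ENNReal.ofReal (L l ω)))
    (hui : ∀ ε : ℝ, 0 < ε → ∃ δ : ℝ, 0 < δ ∧ ∀ l ∈ Set.Icc a b, ∀ s : Set Ω,
      MeasurableSet s → μ s ≤ ENNReal.ofReal δ → ∫ ω in s, L l ω ∂μ ≤ ε)
    {ε : ℝ} (hε : 0 < ε) :
    ∃ δ : ℝ, 0 < δ ∧ ∀ l ∈ Set.Icc a b, ∀ s : Set Ω,
      MeasurableSet s → μ s ≤ ENNReal.ofReal δ →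
        Measure.map (U l) μ s ≤ ENNReal.ofReal ε := by
  obtain ⟨δ, hδ, hLint⟩ := hui ε hε
  refine ⟨δ, hδ, fun l hl s hs hμs => ?_⟩
  have hmap := hpush l hl
  have hfin : ∫⁻ ω in s, ENNReal.ofReal (L l ω) ∂μ < ⊤ := by
    calc ∫⁻ ω in s, ENNReal.ofReal (L l ω) ∂μ
        ≤ ∫⁻ ω, ENNReal.ofReal (L l ω) ∂μ := setLIntegral_le_lintegral _ _
      _ = μ.withDensity (fun ω => ENNReal.ofReal (L l ω)) Set.univ := by
          rw [withDensity_apply _ MeasurableSet.univ, Measure.restrict_univ]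
      _ = Measure.map (U l) μ Set.univ := by rw [hmap]
      _ = μ (U l ⁻¹' Set.univ) := Measure.map_apply (hUm l) MeasurableSet.univ
      _ ≤ 1 := by simp
      _ < ⊤ := ENNReal.one_lt_top
  have hint : IntegrableOn (L l) s μ := by
    refine ⟨((hLm l).aestronglyMeasurable).restrict, ?_⟩
    rw [hasFiniteIntegral_iff_ofReal (Filter.Eventually.of_forall fun ω => hLnn l ω)]
    exact hfin
  have hkey : ENNReal.ofReal (∫ ω in s, L l ω ∂μ) = ∫⁻ ω in s, ENNReal.ofReal (L l ω) ∂μ :=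
    ofReal_integral_eq_lintegral_ofReal hint (Filter.Eventually.of_forall fun ω => hLnn l ω)
  rw [hmap, withDensity_apply _ hs, ← hkey]
  exact ENNReal.ofReal_le_ofReal (hLint l hl s hs hμs)

/-- If `λ ↦ f_λ` is continuous in probability, the pushforward densities
`L_λ = d((U_λ)_*μ)/dμ`, `λ ∈ [a,b]`, form a uniformly integrable family, and
`λ ↦ g ∘ U_λ` is continuous in probability for every bounded continuous `g`,
then `λ ↦ f_λ ∘ U_λ` is continuous in probability. -/
theorem continuity_in_probability_of_composition
    {Ω : Type*} [TopologicalSpace Ω] [PolishSpace Ω] [MeasurableSpace Ω] [BorelSpace Ω]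
    (μ : Measure Ω) [IsProbabilityMeasure μ] (a b : ℝ)
    (f : ℝ → Ω → ℝ) (hfm : ∀ l, Measurable (f l))
    (U : ℝ → Ω → Ω) (hUm : ∀ l, Measurable (U l))
    (L : ℝ → Ω → ℝ) (hLm : ∀ l, Measurable (L l)) (hLnn : ∀ l ω, 0 ≤ L l ω)
    (hpush : ∀ l ∈ Set.Icc a b,
      Measure.map (U l) μ = μ.withDensity (fun ω => ENNReal.ofReal (L l ω)))
    -- uniform integrability of the family {L_λ : λ ∈ [a,b]}
    (hui : ∀ ε : ℝ, 0 < ε → ∃ δ : ℝ, 0 < δ ∧ ∀ l ∈ Set.Icc a b, ∀ s : Set Ω,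
      MeasurableSet s → μ s ≤ ENNReal.ofReal δ → ∫ ω in s, L l ω ∂μ ≤ ε)
    -- λ ↦ f_λ is continuous in probability
    (hfc : ∀ (l : ℝ) (lseq : ℕ → ℝ), (∀ n, lseq n ∈ Set.Icc a b) → l ∈ Set.Icc a b →
      Tendsto lseq atTop (nhds l) →
      TendstoInMeasure μ (fun n => f (lseq n)) atTop (f l))
    -- λ ↦ g ∘ U_λ is continuous in probability for all bounded continuous g
    (hgc : ∀ g : BoundedContinuousFunction Ω ℝ,
      ∀ (l : ℝ) (lseq : ℕ → ℝ), (∀ n, lseq n ∈ Set.Icc a b) → l ∈ Set.Icc a b →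
      Tendsto lseq atTop (nhds l) →
      TendstoInMeasure μ (fun n => g ∘ U (lseq n)) atTop (g ∘ U l)) :
    ∀ (l : ℝ) (lseq : ℕ → ℝ), (∀ n, lseq n ∈ Set.Icc a b) → l ∈ Set.Icc a b →
      Tendsto lseq atTop (nhds l) →
      TendstoInMeasure μ (fun n => f (lseq n) ∘ U (lseq n)) atTop (f l ∘ U l) := by
  intro l lseq hseq hl hten
  rw [tendstoInMeasure_iff_dist]
  intro ε hε
  rw [ENNReal.tendsto_nhds_zero]
  intro η hη
  obtain ⟨r, hr, hrη⟩ : ∃ r : ℝ, 0 < r ∧ ENNReal.ofReal r ≤ η := by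
    rcases eq_or_ne η ⊤ with h | h
    · exact ⟨1, one_pos, by simp [h]⟩
    · exact ⟨η.toReal, ENNReal.toReal_pos hη.ne' h, by rw [ENNReal.ofReal_toReal h]⟩
  obtain ⟨δ, hδ, hBr⟩ := pushforward_small_aux μ a b U hUm L hLm hLnn hpush hui
    (show (0:ℝ) < r/4 by positivity)
  obtain ⟨g, hg⟩ := lusin_approx_aux μ (f l) (hfm l) (show (0:ℝ) < ε/4 by positivity) hδ
  have hs₀ : MeasurableSet {ω | ε/4 ≤ |f l ω - g ω|} :=
    measurableSet_le measurable_const ((hfm l).sub g.continuous.measurable).abs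
  have h1 : ∀ᶠ n in atTop,
      μ {x | ε/4 ≤ dist (f (lseq n) x) (f l x)} ≤ ENNReal.ofReal δ := by
    have h := tendstoInMeasure_iff_dist.mp (hfc l lseq hseq hl hten) (ε/4) (by positivity)
    rw [ENNReal.tendsto_nhds_zero] at h
    exact h _ (by simp only [gt_iff_lt, ENNReal.ofReal_pos]; exact hδ)
  have h2 : ∀ᶠ n in atTop,
      μ {x | ε/4 ≤ dist ((g ∘ U (lseq n)) x) ((g ∘ U l) x)} ≤ ENNReal.ofReal (r/4) := by
    have h := tendstoInMeasure_iff_dist.mp (hgc g l lseq hseq hl hten) (ε/4) (by positivity)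
    rw [ENNReal.tendsto_nhds_zero] at h
    exact h _ (by simp only [gt_iff_lt, ENNReal.ofReal_pos]; positivity)
  filter_upwards [h1, h2] with n hn1 hn2
  have hln := hseq n
  have hmeasB : MeasurableSet {x | ε/4 ≤ dist (f (lseq n) x) (f l x)} :=
    measurableSet_le measurable_const ((hfm (lseq n)).dist (hfm l))
  -- the four error sets
  have hsub : {x | ε ≤ dist ((f (lseq n) ∘ U (lseq n)) x) ((f l ∘ U l) x)} ⊆
      (U (lseq n) ⁻¹' {x | ε/4 ≤ dist (f (lseq n) x) (f l x)}) ∪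
      ((U (lseq n) ⁻¹' {ω | ε/4 ≤ |f l ω - g ω|}) ∪
      ({x | ε/4 ≤ dist ((g ∘ U (lseq n)) x) ((g ∘ U l) x)} ∪
      (U l ⁻¹' {ω | ε/4 ≤ |f l ω - g ω|}))) := by
    intro x hx
    simp only [Set.mem_setOf_eq, Set.mem_union, Set.mem_preimage, Function.comp_apply,
      Real.dist_eq] at *
    by_contra hcon
    push_neg at hcon
    obtain ⟨hc1, hc2, hc3, hc4⟩ := hcon
    have t1 := abs_sub_le (f (lseq n) (U (lseq n) x)) (f l (U (lseq n) x)) (f l (U l x))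
    have t2 := abs_sub_le (f l (U (lseq n) x)) (g (U (lseq n) x)) (f l (U l x))
    have t3 := abs_sub_le (g (U (lseq n) x)) (g (U l x)) (f l (U l x))
    have t4 := abs_sub_comm (g (U l x)) (f l (U l x))
    linarith
  have hμB : μ (U (lseq n) ⁻¹' {x | ε/4 ≤ dist (f (lseq n) x) (f l x)})
      ≤ ENNReal.ofReal (r/4) := by
    rw [← Measure.map_apply (hUm (lseq n)) hmeasB]
    exact hBr (lseq n) hln _ hmeasB hn1
  have hμC : μ (U (lseq n) ⁻¹' {ω | ε/4 ≤ |f l ω - g ω|}) ≤ ENNReal.ofReal (r/4) := by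
    rw [← Measure.map_apply (hUm (lseq n)) hs₀]
    exact hBr (lseq n) hln _ hs₀ hg
  have hμE : μ (U l ⁻¹' {ω | ε/4 ≤ |f l ω - g ω|}) ≤ ENNReal.ofReal (r/4) := by
    rw [← Measure.map_apply (hUm l) hs₀]
    exact hBr l hl _ hs₀ hg
  calc μ {x | ε ≤ dist ((f (lseq n) ∘ U (lseq n)) x) ((f l ∘ U l) x)}
      ≤ μ ((U (lseq n) ⁻¹' {x | ε/4 ≤ dist (f (lseq n) x) (f l x)}) ∪
        ((U (lseq n) ⁻¹' {ω | ε/4 ≤ |f l ω - g ω|}) ∪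
        ({x | ε/4 ≤ dist ((g ∘ U (lseq n)) x) ((g ∘ U l) x)} ∪
        (U l ⁻¹' {ω | ε/4 ≤ |f l ω - g ω|})))) := measure_mono hsub
    _ ≤ μ (U (lseq n) ⁻¹' {x | ε/4 ≤ dist (f (lseq n) x) (f l x)}) +
        (μ (U (lseq n) ⁻¹' {ω | ε/4 ≤ |f l ω - g ω|}) +
        (μ {x | ε/4 ≤ dist ((g ∘ U (lseq n)) x) ((g ∘ U l) x)} +
        μ (U l ⁻¹' {ω | ε/4 ≤ |f l ω - g ω|}))) := by
        refine (measure_union_le _ _).trans (add_le_add_right ?_ _)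
        refine (measure_union_le _ _).trans (add_le_add_right ?_ _)
        exact measure_union_le _ _
    _ ≤ ENNReal.ofReal (r/4) + (ENNReal.ofReal (r/4) +
        (ENNReal.ofReal (r/4) + ENNReal.ofReal (r/4))) :=
        add_le_add hμB (add_le_add hμC (add_le_add hn2 hμE))
    _ = ENNReal.ofReal r := by
        rw [← ENNReal.ofReal_add (by positivity) (by positivity),
          ← ENNReal.ofReal_add (by positivity) (by positivity),
          ← ENNReal.ofReal_add (by positivity) (by positivity)]
        ring_nf
    _ ≤ η := hrη
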